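/- Let m be a metric on the edges of G*π fulfilling the lower triangle inequality. Then for every st-path K in G*π that is not an up-down path, there exists an up-down st-path Q such that Q is strictly higher than K and the length of Q under m is at most the length of K under m. -/

import Mathlib

open SimpleGraph
open scoped ENNReal

variable {V : Type*}

/-- One step of vertex contraction: remove `v` from the current graph and add an edge
between every pair of its current neighbors. -/
def chStep (H : SimpleGraph V) (v : V) : SimpleGraph V where
  Adj a b := a ≠ b ∧ a ≠ v ∧ b ≠ v ∧ (H.Adj a b ∨ (H.Adj v a ∧ H.Adj v b))
  symm := by
    constructor
    rintro a b ⟨h1, h2, h3, h4⟩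
    refine ⟨h1.symm, h3, h2, ?_⟩
    rcases h4 with h | ⟨ha, hb⟩
    · exact Or.inl h.symm
    · exact Or.inr ⟨hb, ha⟩
  loopless := ⟨fun a h => h.1 rfl⟩

theorem chStep_adj {H : SimpleGraph V} {v a b : V} :
    (chStep H v).Adj a b ↔ a ≠ b ∧ a ≠ v ∧ b ≠ v ∧ (H.Adj a b ∨ (H.Adj v a ∧ H.Adj v b)) :=
  Iff.rfl

/-- All edges ever present while contracting the vertices of the list in order:
the edges of the initial graph together with all added shortcuts. -/
def chList : SimpleGraph V → List V → SimpleGraph V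
  | H, [] => H
  | H, v :: l => H ⊔ chList (chStep H v) l

/-- The rank of a vertex with respect to the contraction order `π`. -/
def rk {n : ℕ} (π : Fin n ≃ V) (v : V) : ℕ := (π.symm v : ℕ)

/-- The contraction hierarchy `G*π`: contract `π 0, π 1, …` in this order and collect
all original edges and all added shortcuts. -/
def chGraph {n : ℕ} (G : SimpleGraph V) (π : Fin n ≃ V) : SimpleGraph V :=
  chList G ((List.finRange n).map ⇑π)

/-- A list of vertices is up-down w.r.t. a rank function: ranks strictly increase
along a prefix and strictly decrease along the remaining suffix, the two parts
meeting at the maximum-rank vertex. -/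
def IsUpDown (r : V → ℕ) (l : List V) : Prop :=
  ∃ l₁ x l₂, l = l₁ ++ x :: l₂ ∧
    List.Chain' (fun a b => r a < r b) (l₁ ++ [x]) ∧
    List.Chain' (fun a b => r b < r a) (x :: l₂)

/-- Reachability in the upward directed graph `G^∧π` (edges of `G*π` directed from
lower to higher rank): the vertex set of the search space `SS v`. -/
def UpReach {n : ℕ} (G : SimpleGraph V) (π : Fin n ≃ V) (v u : V) : Prop :=
  Relation.ReflTransGen (fun a b => (chGraph G π).Adj a b ∧ rk π a < rk π b) v u

/-- Length of a walk: the sum of the weights of its edges. -/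
noncomputable def wlen {H : SimpleGraph V} (m : V → V → ℝ≥0∞) {s t : V}
    (p : H.Walk s t) : ℝ≥0∞ :=
  (p.darts.map (fun d => m d.toProd.1 d.toProd.2)).sum

/-- Shortest path distance in a graph `H` under edge weights `m`. -/
noncomputable def gdist (H : SimpleGraph V) (m : V → V → ℝ≥0∞) (s t : V) : ℝ≥0∞ :=
  ⨅ (p : H.Walk s t), wlen m p

/-- Minimum length of an up-down `s`-`t` path in `G*π`. -/
noncomputable def updist {n : ℕ} (G : SimpleGraph V) (π : Fin n ≃ V)
    (m : V → V → ℝ≥0∞) (s t : V) : ℝ≥0∞ :=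
  ⨅ (p : (chGraph G π).Walk s t) (_ : IsUpDown (rk π) p.support), wlen m p

/-- Minimum length of a strictly rank-increasing `u`-`v` path in `G*π`. -/
noncomputable def upOnlyDist {n : ℕ} (G : SimpleGraph V) (π : Fin n ≃ V)
    (m : V → V → ℝ≥0∞) (u v : V) : ℝ≥0∞ :=
  ⨅ (p : (chGraph G π).Walk u v)
    (_ : List.Chain' (fun a b => rk π a < rk π b) p.support), wlen m p

/-- `S` is a balanced separator of the subgraph of `G` induced by `U`. -/
def IsBalancedSepOn [DecidableEq V] (G : SimpleGraph V) (U S : Finset V) : Prop :=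
  S ⊆ U ∧ ∃ A B : Finset V, A ⊆ U ∧ B ⊆ U ∧
    Disjoint A B ∧ Disjoint A S ∧ Disjoint B S ∧ A ∪ B ∪ S = U ∧
    (∀ a ∈ A, ∀ b ∈ B, ¬ G.Adj a b) ∧
    3 * A.card ≤ 2 * U.card ∧ 3 * B.card ≤ 2 * U.card

/-- Nested dissection orders (as lists, earliest contracted first, separator last)
of induced subgraphs of `G`, in which the separator chosen at every recursion step on
a `k`-vertex subgraph is balanced and has cardinality at most `c * k ^ α`. -/
inductive IsNDOrder [DecidableEq V] (G : SimpleGraph V) (c α : ℝ) : Finset V → List V → Prop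
  | empty : IsNDOrder G c α ∅ []
  | step {U S A B : Finset V} {lA lB lS : List V} :
      Disjoint A B → Disjoint A S → Disjoint B S → A ∪ B ∪ S = U →
      (∀ a ∈ A, ∀ b ∈ B, ¬ G.Adj a b) →
      3 * A.card ≤ 2 * U.card → 3 * B.card ≤ 2 * U.card →
      ((S.card : ℝ) ≤ c * (U.card : ℝ) ^ α) →
      lS.Nodup → lS.toFinset = S →
      IsNDOrder G c α A lA → IsNDOrder G c α B lB →
      IsNDOrder G c α U (lA ++ lB ++ lS)

/-- Number of vertices of the search space `SS v` in `G^∧π`. -/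
noncomputable def nVertsSS {n : ℕ} (G : SimpleGraph V) (π : Fin n ≃ V) (v : V) : ℕ :=
  {u | UpReach G π v u}.ncard

/-- Number of arcs of the search space `SS v` in `G^∧π`: arcs of `G^∧π` with both
endpoints reachable from `v`. -/
noncomputable def nArcsSS {n : ℕ} (G : SimpleGraph V) (π : Fin n ≃ V) (v : V) : ℕ :=
  {q : V × V | (chGraph G π).Adj q.1 q.2 ∧ rk π q.1 < rk π q.2 ∧
    UpReach G π v q.1 ∧ UpReach G π v q.2}.ncard

/-- The rank sequence of a walk: for each edge, the minimum of the ranks of its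
endpoints, sorted in decreasing order. -/
def rankSeq {H : SimpleGraph V} (r : V → ℕ) {s t : V} (p : H.Walk s t) : List ℕ :=
  (p.darts.map (fun d => min (r d.toProd.1) (r d.toProd.2))).insertionSort (· ≥ ·)

/-- Directed length of a walk in `G*π` under a pair of directed metrics `(mu, md)`:
each edge traversed from lower rank to higher rank costs its upward weight,
each edge traversed from higher rank to lower rank costs its downward weight. -/
noncomputable def dlen {H : SimpleGraph V} (r : V → ℕ) (mu md : V → V → ℝ≥0∞)
    {s t : V} (p : H.Walk s t) : ℝ≥0∞ :=
  (p.darts.map (fun d =>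
    if r d.toProd.1 < r d.toProd.2 then mu d.toProd.1 d.toProd.2
    else md d.toProd.2 d.toProd.1)).sum

/-- Length of a directed walk `s :: l` under arc weights `wD`. -/
noncomputable def dWalkLen (wD : V → V → ℝ≥0∞) : V → List V → ℝ≥0∞
  | _, [] => 0
  | s, x :: l => wD s x + dWalkLen wD x l

/-- Shortest directed path distance in the directed graph `D` under arc weights `wD`. -/
noncomputable def ddist (D : V → V → Prop) (wD : V → V → ℝ≥0∞) (s t : V) : ℝ≥0∞ :=
  ⨅ (l : List V) (_ : List.Chain D s l ∧ l.getLastD s = t), dWalkLen wD s l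


theorem chList_le (H : SimpleGraph V) (l : List V) : H ≤ chList H l := by
  induction l generalizing H with
  | nil => exact le_refl _
  | cons v l ih => exact le_sup_left

theorem chList_isolated {H : SimpleGraph V} {v : V} (hv : ∀ w, ¬ H.Adj v w)
    (l : List V) : ∀ w, ¬ (chList H l).Adj v w := by
  induction l generalizing H with
  | nil => exact hv
  | cons u l ih =>
    intro w hw
    rcases hw with hw | hw
    · exact hv w hw
    · refine ih (H := chStep H u) ?_ w hw
      rintro w' hw'
      obtain ⟨h1, h2, h3, h4 | ⟨h5, h6⟩⟩ := chStep_adj.1 hw'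
      · exact hv w' h4
      · exact hv u h5.symm

theorem chList_shortcut : ∀ (l₁ : List V) (H : SimpleGraph V) (l₂ : List V) {x y z : V},
    x ∉ l₁ → y ∉ l₁ → z ∉ l₁ → x ≠ y →
    (chList H (l₁ ++ z :: l₂)).Adj x z → (chList H (l₁ ++ z :: l₂)).Adj z y →
    (chList H (l₁ ++ z :: l₂)).Adj x y := by
  intro l₁
  induction l₁ with
  | nil =>
    intro H l₂ x y z _ _ _ hxy hxz hzy
    have hiso : ∀ w, ¬ (chStep H z).Adj z w := by
      rintro w hw; obtain ⟨h1, h2, _⟩ := chStep_adj.1 hw; exact h2 rfl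
    have hxzH : H.Adj x z := by
      rcases hxz with h | h
      · exact h
      · exact absurd h.symm (chList_isolated hiso l₂ x)
    have hzyH : H.Adj z y := by
      rcases hzy with h | h
      · exact h
      · exact absurd h (chList_isolated hiso l₂ y)
    right
    exact chList_le _ l₂ (chStep_adj.2 ⟨hxy, hxzH.ne, hzyH.ne', Or.inr ⟨hxzH.symm, hzyH⟩⟩)
  | cons v l₁ ih =>
    intro H l₂ x y z hx hy hz hxy hxz hzy
    simp only [List.mem_cons, not_or] at hx hy hz
    have lift : ∀ {a b : V}, a ≠ v → b ≠ v →
        (chList H (v :: (l₁ ++ z :: l₂))).Adj a b →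
        (chList (chStep H v) (l₁ ++ z :: l₂)).Adj a b := by
      intro a b hav hbv hab
      rcases hab with h | h
      · exact chList_le _ _ (chStep_adj.2 ⟨h.ne, hav, hbv, Or.inl h⟩)
      · exact h
    right
    exact ih (chStep H v) l₂ hx.2 hy.2 hz.2 hxy
      (lift hx.1 hz.1 hxz) (lift hz.1 hy.1 hzy)

theorem order_decomp {n : ℕ} (π : Fin n ≃ V) (z : V) :
    ∃ l₁ l₂, (List.finRange n).map ⇑π = l₁ ++ z :: l₂ ∧
      ∀ x, x ∈ l₁ → rk π x < rk π z := by
  set k := rk π z with hk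
  have hkn : k < n := (π.symm z).isLt
  have hlen : (List.finRange n).length = n := List.length_finRange
  refine ⟨((List.finRange n).take k).map ⇑π, ((List.finRange n).drop (k+1)).map ⇑π, ?_, ?_⟩
  · have hfr : List.finRange n =
        (List.finRange n).take k ++ π.symm z :: (List.finRange n).drop (k+1) := by
      conv_lhs => rw [← List.take_append_drop k (List.finRange n)]
      congr 1
      rw [List.drop_eq_getElem_cons (by omega), List.getElem_finRange]
      have : Fin.cast (List.length_finRange) ⟨k, by omega⟩ = π.symm z := Fin.ext (by simp [hk, rk])
      rw [this]
    conv_lhs => rw [hfr]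
    simp
  · intro x hx
    simp only [List.mem_map] at hx
    obtain ⟨i, hi, rfl⟩ := hx
    rw [List.mem_take_iff_getElem] at hi
    obtain ⟨j, hj, hji⟩ := hi
    rw [List.getElem_finRange] at hji
    have : (i : ℕ) = j := by rw [← hji]; simp
    have : rk π (π i) = (i : ℕ) := by simp [rk]
    omega

theorem chGraph_shortcut {n : ℕ} (G : SimpleGraph V) (π : Fin n ≃ V) {x y z : V}
    (hxy : x ≠ y) (hzx : rk π z < rk π x) (hzy : rk π z < rk π y)
    (hxz : (chGraph G π).Adj x z) (hzy' : (chGraph G π).Adj z y) :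
    (chGraph G π).Adj x y := by
  obtain ⟨l₁, l₂, heq, hmem⟩ := order_decomp π z
  rw [chGraph, heq] at hxz hzy' ⊢
  exact chList_shortcut l₁ G l₂
    (fun h => by have := hmem x h; omega)
    (fun h => by have := hmem y h; omega)
    (fun h => by have := hmem z h; omega)
    hxy hxz hzy'

theorem valley_or_updown {H : SimpleGraph V} (r : V → ℕ) (hr : Function.Injective r) :
    ∀ {s t : V} (K : H.Walk s t),
    IsUpDown r K.support ∨
    ∃ (u z w : V) (p : H.Walk s u) (h1 : H.Adj u z) (h2 : H.Adj z w) (q : H.Walk w t),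
      K = p.append (Walk.cons h1 (Walk.cons h2 q)) ∧ r z < r u ∧ r z < r w := by
  intro s t K
  induction K with
  | nil => exact Or.inl ⟨[], _, [], rfl, List.isChain_singleton _, List.isChain_singleton _⟩
  | @cons s b t h K' ih =>
    rcases ih with hud | ⟨u, z, w, p, h1, h2, q, heq, hz1, hz2⟩
    · obtain ⟨l₁, x, l₂, hsup, hc1, hc2⟩ := hud
      have hsb : r s ≠ r b := fun hrsb => h.ne (hr hrsb)
      rcases lt_or_gt_of_ne hsb with hlt | hgt
      · -- r s < r b : stays up-down
        left
        cases l₁ with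
        | nil =>
          have hx : x = b := by
            have := K'.support_eq_cons
            rw [hsup] at this; exact (List.cons.injEq .. ▸ this).1.symm ▸ rfl
          subst hx
          exact ⟨[s], x, l₂, by simp [hsup], List.isChain_pair.2 hlt, hc2⟩
        | cons c l₁' =>
          have hc : c = b := by
            have := K'.support_eq_cons
            rw [hsup] at this
            exact (List.cons.injEq .. ▸ this).1
          subst hc
          refine ⟨s :: c :: l₁', x, l₂, by simp [hsup], ?_, hc2⟩
          exact List.isChain_cons_cons.2 ⟨hlt, hc1⟩
      · -- r b < r s
        cases l₁ with
        | nil =>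
          have hx : x = b := by
            have := K'.support_eq_cons
            rw [hsup] at this; exact (List.cons.injEq .. ▸ this).1.symm ▸ rfl
          subst hx
          left
          exact ⟨[], s, x :: l₂, by simp [hsup], List.isChain_singleton _,
            List.isChain_cons_cons.2 ⟨hgt, hc2⟩⟩
        | cons c l₁' =>
          cases K' with
          | nil => simp at hsup
          | @cons b d t h₂ K'' =>
            right
            have hsup' : b :: K''.support = c :: (l₁' ++ x :: l₂) := by
              simpa using hsup
            have hbc : c = b := ((List.cons.injEq .. ▸ hsup').1).symm
            have hsup'' : K''.support = l₁' ++ x :: l₂ := (List.cons.injEq .. ▸ hsup').2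
            have hbd : r b < r d := by
              subst hbc
              cases l₁' with
              | nil =>
                have hx : x = d := by
                  have := K''.support_eq_cons
                  rw [hsup''] at this
                  exact (List.cons.injEq .. ▸ this).1
                subst hx
                simpa using (List.isChain_pair.1 hc1)
              | cons e l₁'' =>
                have he : e = d := by
                  have := K''.support_eq_cons
                  rw [hsup''] at this
                  exact (List.cons.injEq .. ▸ this).1
                have hc1' : List.Chain' (fun a b => r a < r b) (c :: e :: (l₁'' ++ [x])) := by
                  simpa using hc1
                exact he ▸ (List.isChain_cons_cons.1 hc1').1
            exact ⟨s, b, d, Walk.nil, h, h₂, K'', by simp, hgt, hbd⟩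
    · exact Or.inr ⟨u, z, w, Walk.cons h p, h1, h2, q, by rw [heq, Walk.cons_append], hz1, hz2⟩

section ListLemmas
open List

/-- strictly-higher relation on rank sequences -/
def RSgt (A B : List ℕ) : Prop := ∃ p a b l₁ l₂, a < b ∧ A = p ++ a :: l₁ ∧ B = p ++ b :: l₂

theorem RSgt.not_prefix_left {A B : List ℕ} (h : RSgt A B) : ¬ (A <+: B) := by
  obtain ⟨p, a, b, l₁, l₂, hab, rfl, rfl⟩ := h
  rintro ⟨s, hs⟩
  rw [append_assoc] at hs
  have := append_cancel_left hs
  simp at this; omega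

theorem RSgt.not_prefix_right {A B : List ℕ} (h : RSgt A B) : ¬ (B <+: A) := by
  obtain ⟨p, a, b, l₁, l₂, hab, rfl, rfl⟩ := h
  rintro ⟨s, hs⟩
  rw [append_assoc] at hs
  have := append_cancel_left hs
  simp at this; omega

theorem RSgt.lex {A B : List ℕ} (h : RSgt A B) : List.Lex (· < ·) A B := by
  obtain ⟨p, a, b, l₁, l₂, hab, rfl, rfl⟩ := h
  induction p with
  | nil => exact List.Lex.rel hab
  | cons x p ih => exact List.Lex.cons ih

theorem RSgt.trans {A B C : List ℕ} (h1 : RSgt A B) (h2 : RSgt B C) : RSgt A C := by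
  obtain ⟨p, a, b, l₁, l₂, hab, rfl, hB⟩ := h1
  obtain ⟨q, c, d, m₁, m₂, hcd, hB', rfl⟩ := h2
  rw [hB'] at hB
  rcases List.append_eq_append_iff.1 hB with ⟨r, hq, hr⟩ | ⟨r, hp, hr⟩
  · subst hq
    cases r with
    | nil =>
      obtain ⟨rfl, rfl⟩ : c = b ∧ m₁ = l₂ := by simpa using hr
      exact ⟨q, a, d, l₁, m₂, lt_trans hab hcd, by simp, by simp⟩
    | cons x r =>
      obtain ⟨rfl, hr⟩ : c = x ∧ m₁ = r ++ b :: l₂ := by simpa using hr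
      exact ⟨q, c, d, r ++ a :: l₁, m₂, hcd, by simp, rfl⟩
  · subst hp
    cases r with
    | nil =>
      obtain ⟨rfl, rfl⟩ : b = c ∧ l₂ = m₁ := by simpa using hr
      exact ⟨p, a, d, l₁, m₂, lt_trans hab hcd, by simp, by simp⟩
    | cons x r =>
      obtain ⟨rfl, rfl⟩ : b = x ∧ l₂ = r ++ c :: m₁ := by simpa using hr
      exact ⟨p, a, b, l₁, r ++ d :: m₂, hab, rfl, by simp⟩

theorem eq_of_perm_of_sorted_aux {r : ℕ → ℕ → Prop} [Std.Antisymm r] {l₁ l₂ : List ℕ}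
    (hp : l₁ ~ l₂) (h₁ : List.Pairwise r l₁) (h₂ : List.Pairwise r l₂) : l₁ = l₂ :=
  hp.eq_of_pairwise' h₁ h₂

abbrev sortD (l : List ℕ) : List ℕ := l.insertionSort (· ≥ ·)

theorem sortD_eq_of_perm {l l' : List ℕ} (h : l ~ l') : sortD l = sortD l' :=
  eq_of_perm_of_sorted_aux (((List.perm_insertionSort _ l).trans h).trans
    (List.perm_insertionSort _ l').symm)
    (List.pairwise_insertionSort _ l) (List.pairwise_insertionSort _ l')

theorem sortD_ge_mem {l : List ℕ} {x : ℕ} (h : x ∈ sortD l) : x ∈ l :=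
  (List.perm_insertionSort _ l).mem_iff.1 h

/-- splitting the sorted list of `l ++ M` where every element of `l` is `< r`. -/
theorem sortD_split (r : ℕ) (l M : List ℕ) (hl : ∀ x ∈ l, x < r) :
    sortD (l ++ M) = sortD (M.filter (fun x => r ≤ x)) ++ sortD (l ++ M.filter (fun x => !(r ≤ x))) := by
  apply eq_of_perm_of_sorted_aux (r := (· ≥ ·))
  · calc sortD (l ++ M) ~ l ++ M := List.perm_insertionSort _ _
      _ ~ l ++ (M.filter (fun x => r ≤ x) ++ M.filter (fun x => !(r ≤ x))) :=
          List.Perm.append_left l (List.filter_append_perm _ M).symm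
      _ ~ M.filter (fun x => r ≤ x) ++ (l ++ M.filter (fun x => !(r ≤ x))) := by
          rw [← List.append_assoc, ← List.append_assoc]
          exact List.Perm.append_right _ (List.perm_append_comm)
      _ ~ _ := ((List.perm_insertionSort _ _).append (List.perm_insertionSort _ _)).symm
  · exact List.pairwise_insertionSort _ _
  · rw [List.pairwise_append]
    refine ⟨List.pairwise_insertionSort _ _, List.pairwise_insertionSort _ _, ?_⟩
    intro a ha b hb
    have ha' : r ≤ a := by
      have := sortD_ge_mem ha; simpa using (List.mem_filter.1 this).2
    have hb' : b < r := by
      have := sortD_ge_mem hb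
      rcases List.mem_append.1 this with h | h
      · exact hl _ h
      · have := (List.mem_filter.1 h).2; simpa using this
    omega

theorem sortD_split_self (r : ℕ) (M : List ℕ) :
    sortD (r :: M) = sortD (M.filter (fun x => r ≤ x)) ++ r :: sortD (M.filter (fun x => !(r ≤ x))) := by
  apply eq_of_perm_of_sorted_aux (r := (· ≥ ·))
  · calc sortD (r :: M) ~ r :: M := List.perm_insertionSort _ _
      _ ~ r :: (M.filter (fun x => r ≤ x) ++ M.filter (fun x => !(r ≤ x))) :=
          List.Perm.cons r (List.filter_append_perm _ M).symm
      _ ~ M.filter (fun x => r ≤ x) ++ r :: M.filter (fun x => !(r ≤ x)) :=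
          List.perm_middle.symm
      _ ~ _ := ((List.perm_insertionSort _ _).append
          (List.Perm.cons r (List.perm_insertionSort _ _))).symm
  · exact List.pairwise_insertionSort _ _
  · rw [List.pairwise_append]
    refine ⟨List.pairwise_insertionSort _ _, ?_, ?_⟩
    · rw [List.pairwise_cons]
      refine ⟨fun b hb => ?_, List.pairwise_insertionSort _ _⟩
      have := (List.mem_filter.1 (sortD_ge_mem hb)).2
      simp at this; omega
    · intro x hx b hb
      have hx' : r ≤ x := by
        have := (List.mem_filter.1 (sortD_ge_mem hx)).2; simpa using this
      rcases List.mem_cons.1 hb with rfl | hb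
      · exact hx'
      · have := (List.mem_filter.1 (sortD_ge_mem hb)).2
        simp at this; omega


theorem sortD_RSgt {a r : ℕ} (M : List ℕ) (h : a < r) :
    RSgt (sortD ([a, a] ++ M)) (sortD (r :: M)) := by
  have h1 := sortD_split r [a, a] M (by simpa using h)
  have h2 := sortD_split_self r M
  have hGne : sortD ([a, a] ++ M.filter (fun x => !(r ≤ x))) ≠ [] := by
    intro hnil
    have hmm : a ∈ sortD ([a, a] ++ M.filter (fun x => !(r ≤ x))) :=
      (List.perm_insertionSort _ _).symm.mem_iff.1 (by simp)
    rw [hnil] at hmm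
    simp at hmm
  obtain ⟨g, G', hGeq⟩ := List.exists_cons_of_ne_nil hGne
  have hg : g < r := by
    have hmem : g ∈ ([a, a] ++ M.filter (fun x => !(r ≤ x))) := by
      apply sortD_ge_mem; rw [hGeq]; simp
    rcases List.mem_append.1 hmem with hm | hm
    · simp at hm; omega
    · have := (List.mem_filter.1 hm).2; simp at this; omega
  exact ⟨sortD (M.filter (fun x => r ≤ x)), g, r, G',
    sortD (M.filter (fun x => !(r ≤ x))), hg, by rw [h1, hGeq], h2⟩

end ListLemmas

theorem rk_inj {n : ℕ} (π : Fin n ≃ V) : Function.Injective (rk π) :=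
  fun a b h => π.symm.injective (Fin.ext h)

theorem stmt10_aux {n : ℕ} (G : SimpleGraph V) (π : Fin n ≃ V) (m : V → V → ℝ≥0∞)
    (hlti : ∀ x y z, (chGraph G π).Adj x y → (chGraph G π).Adj x z →
      (chGraph G π).Adj z y → rk π z < rk π x → rk π z < rk π y →
      m x y ≤ m x z + m z y) :
    ∀ (N : ℕ) {s t : V} (K : (chGraph G π).Walk s t), K.length ≤ N → K.IsPath →
      ¬ IsUpDown (rk π) K.support →
      ∃ Q : (chGraph G π).Walk s t, Q.IsPath ∧ IsUpDown (rk π) Q.support ∧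
        RSgt (rankSeq (rk π) K) (rankSeq (rk π) Q) ∧ wlen m Q ≤ wlen m K := by
  intro N
  induction N with
  | zero =>
    intro s t K hlen hK hnud
    exfalso
    cases K with
    | nil =>
      exact hnud ⟨[], s, [], by simp, List.isChain_singleton _, List.isChain_singleton _⟩
    | cons h K' => simp at hlen
  | succ N ih =>
    intro s t K hlen hK hnud
    rcases valley_or_updown (rk π) (rk_inj π) K with hud | ⟨u, z, w, p, h1, h2, q, heq, hz1, hz2⟩
    · exact absurd hud hnud
    · subst heq
      have hnd : (p.support ++ z :: q.support).Nodup := by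
        have := hK.support_nodup
        rwa [Walk.support_append, Walk.support_cons, Walk.support_cons, List.tail_cons] at this
      have hne : u ≠ w := by
        intro h
        subst h
        exact (List.disjoint_of_nodup_append hnd) p.end_mem_support
          (List.mem_cons_of_mem _ q.start_mem_support)
      have hxy : (chGraph G π).Adj u w := chGraph_shortcut G π hne hz1 hz2 h1 h2
      set K' := p.append (Walk.cons hxy q) with hK'def
      have hK'path : K'.IsPath := by
        rw [Walk.isPath_def, hK'def, Walk.support_append, Walk.support_cons, List.tail_cons]
        exact List.Nodup.sublist ((List.sublist_cons_self z q.support).append_left p.support) hnd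
      have hdK : (p.append (Walk.cons h1 (Walk.cons h2 q))).darts
          = p.darts ++ Dart.mk (u, z) h1 :: Dart.mk (z, w) h2 :: q.darts := by
        simp [Walk.darts_append, Walk.darts_cons]
      have hdK' : K'.darts = p.darts ++ Dart.mk (u, w) hxy :: q.darts := by
        simp [hK'def, Walk.darts_append, Walk.darts_cons]
      have hwlen : wlen m K' ≤ wlen m (p.append (Walk.cons h1 (Walk.cons h2 q))) := by
        rw [wlen, wlen, hdK, hdK']
        simp only [List.map_append, List.map_cons, List.sum_append, List.sum_cons]
        have hm : m u w ≤ m u z + m z w := hlti u w z hxy h1 h2 hz1 hz2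
        calc _ ≤ _ := add_le_add le_rfl (add_le_add hm le_rfl)
          _ = _ := by ring
      set f : (chGraph G π).Dart → ℕ :=
        fun d => min (rk π d.toProd.1) (rk π d.toProd.2) with hf
      have e1 : rankSeq (rk π) (p.append (Walk.cons h1 (Walk.cons h2 q)))
          = sortD ([rk π z, rk π z] ++ (p.darts.map f ++ q.darts.map f)) := by
        apply sortD_eq_of_perm
        rw [hdK]
        simp only [List.map_append, List.map_cons, hf,
          min_eq_right hz1.le, min_eq_left hz2.le]
        exact List.perm_middle.trans (List.Perm.cons _ List.perm_middle)
      have e2 : rankSeq (rk π) K'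
          = sortD (min (rk π u) (rk π w) :: (p.darts.map f ++ q.darts.map f)) := by
        apply sortD_eq_of_perm
        rw [hdK']
        simp only [List.map_append, List.map_cons, hf]
        exact List.perm_middle
      have hrs : RSgt (rankSeq (rk π) (p.append (Walk.cons h1 (Walk.cons h2 q))))
          (rankSeq (rk π) K') := by
        rw [e1, e2]
        exact sortD_RSgt _ (lt_min hz1 hz2)
      have hlen' : K'.length ≤ N := by
        have hL1 : (p.append (Walk.cons h1 (Walk.cons h2 q))).length
            = p.length + (q.length + 2) := by
          simp [Walk.length_append, Walk.length_cons]
        have hL2 : K'.length = p.length + (q.length + 1) := by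
          simp [hK'def, Walk.length_append, Walk.length_cons]
        omega
      by_cases hud' : IsUpDown (rk π) K'.support
      · exact ⟨K', hK'path, hud', hrs, hwlen⟩
      · obtain ⟨Q, hQ1, hQ2, hQ3, hQ4⟩ := ih K' hlen' hK'path hud'
        exact ⟨Q, hQ1, hQ2, hrs.trans hQ3, le_trans hQ4 hwlen⟩

/-- If `m` fulfills the lower triangle inequality, then every
`s`-`t` path `K` in `G*π` that is not up-down can be replaced by an up-down
`s`-`t` path `Q` that is strictly higher than `K` and no longer than `K`. -/
theorem stmt10 {V : Type*} {n : ℕ} (G : SimpleGraph V) (hG : G.Connected)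
    (π : Fin n ≃ V) (m : V → V → ℝ≥0∞)
    (hm_symm : ∀ a b, m a b = m b a)
    (hm_pos : ∀ a b, (chGraph G π).Adj a b → 0 < m a b)
    (hlti : ∀ x y z, (chGraph G π).Adj x y → (chGraph G π).Adj x z →
      (chGraph G π).Adj z y → rk π z < rk π x → rk π z < rk π y →
      m x y ≤ m x z + m z y)
    (s t : V) (K : (chGraph G π).Walk s t) (hK : K.IsPath)
    (hKnotud : ¬ IsUpDown (rk π) K.support) :
    ∃ Q : (chGraph G π).Walk s t, Q.IsPath ∧ IsUpDown (rk π) Q.support ∧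
      ¬ (rankSeq (rk π) Q <+: rankSeq (rk π) K) ∧
      ¬ (rankSeq (rk π) K <+: rankSeq (rk π) Q) ∧
      List.Lex (· < ·) (rankSeq (rk π) K) (rankSeq (rk π) Q) ∧
      wlen m Q ≤ wlen m K := by
  obtain ⟨Q, h1, h2, h3, h4⟩ := stmt10_aux G π m hlti K.length K le_rfl hK hKnotud
  exact ⟨Q, h1, h2, h3.not_prefix_right, h3.not_prefix_left, h3.lex, h4⟩
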